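/- For non-negative real numbers a and b, a·log(2a/(a+b)) + b·log(2b/(a+b)) ≥ (1/6)·(a-b)²/(a+b), with the conventions 0·log 0 = 0 and the left side interpreted as 0 when a = b = 0. -/

import Mathlib

/-- Padé-type lower bound for the logarithm: for `u ≥ 0`, `2u/(2+u) ≤ log (1+u)`. -/
lemma pade_log (u : ℝ) (hu : 0 ≤ u) : 2 * u / (2 + u) ≤ Real.log (1 + u) := by
  set f : ℝ → ℝ := fun v => Real.log (1 + v) - 2 * v / (2 + v) with hf
  have hder : ∀ v : ℝ, 0 < v → HasDerivAt f (1 / (1 + v) - 4 / (2 + v) ^ 2) v := by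
    intro v hv
    have h1 : (1 : ℝ) + v ≠ 0 := by linarith
    have h2 : (2 : ℝ) + v ≠ 0 := by linarith
    have hlog : HasDerivAt (fun w : ℝ => Real.log (1 + w)) (1 / (1 + v)) v := by
      have := (Real.hasDerivAt_log h1).comp v ((hasDerivAt_id v).const_add 1)
      simpa [one_div, Function.comp_def] using this
    have hdiv : HasDerivAt (fun w : ℝ => 2 * w / (2 + w)) (4 / (2 + v) ^ 2) v := by
      have hnum : HasDerivAt (fun w : ℝ => 2 * w) 2 v := by
        simpa using (hasDerivAt_id v).const_mul 2
      have hden : HasDerivAt (fun w : ℝ => 2 + w) 1 v := (hasDerivAt_id v).const_add 2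
      have := hnum.div hden h2
      exact this.congr_deriv (by ring)
    exact hlog.sub hdiv
  have hmono : MonotoneOn f (Set.Ici 0) := by
    apply monotoneOn_of_deriv_nonneg (convex_Ici 0)
    · apply ContinuousOn.sub
      · apply ContinuousOn.log (by fun_prop)
        intro v hv; simp only [Set.mem_Ici] at hv; intro h; linarith
      · apply ContinuousOn.div (by fun_prop) (by fun_prop)
        intro v hv; simp only [Set.mem_Ici] at hv; intro h; linarith
    · intro v hv
      rw [interior_Ici] at hv
      have hv' : 0 < v := hv
      exact ((hder v hv').differentiableAt).differentiableWithinAt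
    · intro v hv
      rw [interior_Ici] at hv
      have hv' : 0 < v := hv
      rw [(hder v hv').deriv]
      have h1 : (0:ℝ) < 1 + v := by linarith
      have h2 : (0:ℝ) < (2 + v) ^ 2 := by positivity
      rw [sub_nonneg, div_le_div_iff₀ h2 h1]
      nlinarith [sq_nonneg v]
  have h0 : f 0 ≤ f u := hmono (by simp) (by simpa using hu) hu
  have : f 0 = 0 := by simp [hf]
  have : 0 ≤ Real.log (1 + u) - 2 * u / (2 + u) := by
    rw [← this] at h0 ⊢; simpa [hf] using h0
  linarith

lemma aux_main (a b : ℝ) (hb : 0 ≤ b) (hab : b ≤ a) (hs : 0 < a + b) :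
    a * Real.log (2 * a / (a + b)) + b * Real.log (2 * b / (a + b)) ≥
      (1 / 6) * (a - b) ^ 2 / (a + b) := by
  have ha : 0 < a := by linarith
  have hs' : a + b ≠ 0 := hs.ne'
  rcases (eq_or_lt_of_le hb).symm.symm with hb0 | hb0
  · -- b = 0
    subst hb0
    have h2 : 2 * a / (a + 0) = 2 := by
      rw [add_zero, mul_div_assoc, div_self ha.ne', mul_one]
    have h3 : 1 / 6 * (a - 0) ^ 2 / (a + 0) = a / 6 := by
      rw [add_zero, sub_zero]
      field_simp
    rw [h2, h3, zero_mul, add_zero]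
    nlinarith [Real.log_two_gt_d9, ha]
  · -- b > 0
    set u : ℝ := (a - b) / (a + b) with hu_def
    have hu : 0 ≤ u := div_nonneg (by linarith) hs.le
    have hx : 1 + u = 2 * a / (a + b) := by
      rw [hu_def]
      field_simp
      ring
    have h1 : 2 * u / (2 + u) ≤ Real.log (2 * a / (a + b)) := by
      rw [← hx]; exact pade_log u hu
    have h2 : 1 - (a + b) / (2 * b) ≤ Real.log (2 * b / (a + b)) := by
      have hpos : (0:ℝ) < (a + b) / (2 * b) := by positivity
      have hle := Real.log_le_sub_one_of_pos hpos
      have heq : Real.log (2 * b / (a + b)) = - Real.log ((a + b) / (2 * b)) := by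
        rw [← Real.log_inv, inv_div]
      rw [heq]; linarith
    have hlb : a * (2 * u / (2 + u)) + b * (1 - (a + b) / (2 * b)) ≤
        a * Real.log (2 * a / (a + b)) + b * Real.log (2 * b / (a + b)) := by
      gcongr
    have h3ab : (0:ℝ) < 3 * a + b := by linarith
    have h2u : 2 + u = (3 * a + b) / (a + b) := by
      rw [hu_def]; field_simp; ring
    have e1 : a * (2 * u / (2 + u)) = 2 * a * (a - b) / (3 * a + b) := by
      rw [h2u, hu_def]
      field_simp
    have e2 : b * (1 - (a + b) / (2 * b)) = -(a - b) / 2 := by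
      field_simp
      ring
    have e3 : 2 * a * (a - b) / (3 * a + b) + -(a - b) / 2 = (a - b) ^ 2 / (2 * (3 * a + b)) := by
      field_simp
      ring
    have e4 : 1 / 6 * (a - b) ^ 2 / (a + b) = (a - b) ^ 2 / (6 * (a + b)) := by
      field_simp
    have e5 : (a - b) ^ 2 / (6 * (a + b)) ≤ (a - b) ^ 2 / (2 * (3 * a + b)) := by
      rw [div_le_div_iff₀ (by positivity) (by positivity)]
      nlinarith [sq_nonneg (a - b)]
    rw [ge_iff_le, e4]
    calc (a - b) ^ 2 / (6 * (a + b)) ≤ (a - b) ^ 2 / (2 * (3 * a + b)) := e5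
      _ = a * (2 * u / (2 + u)) + b * (1 - (a + b) / (2 * b)) := by rw [e1, e2, e3]
      _ ≤ _ := hlb

theorem log_chi_squared_reverse (a b : ℝ) (ha : 0 ≤ a) (hb : 0 ≤ b) :
    a * Real.log (2 * a / (a + b)) + b * Real.log (2 * b / (a + b)) ≥
      (1 / 6) * (a - b) ^ 2 / (a + b) := by
  rcases le_total b a with h | h
  · rcases eq_or_lt_of_le (by linarith : (0:ℝ) ≤ a + b) with hs | hs
    · have ha0 : a = 0 := by linarith
      have hb0 : b = 0 := by linarith
      simp [ha0, hb0]
    · exact aux_main a b hb h hs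
  · rcases eq_or_lt_of_le (by linarith : (0:ℝ) ≤ a + b) with hs | hs
    · have ha0 : a = 0 := by linarith
      have hb0 : b = 0 := by linarith
      simp [ha0, hb0]
    · have := aux_main b a ha h (by linarith)
      have e1 : b + a = a + b := by ring
      have e2 : (b - a) ^ 2 = (a - b) ^ 2 := by ring
      rw [e1, e2] at this
      linarith [this]
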